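/- arXiv:2111.11586 — 2 statements merged into one kernel-verified Lean document; each statement's English description precedes it below -/
import Mathlib

section
/- If Δ is generated by a finite set S and N is the normal closure in Δ of a finite set F, then the fiber product Δ ×_N Δ is generated by the finite set {(s,s) : s ∈ S} ∪ {(1,w) : w ∈ F}. -/
/-- The fiber product `Δ ×_N Δ = {(δn, δ) : δ ∈ Δ, n ∈ N}` as a subgroup of `Δ × Δ`. -/
def fiberProduct (Δ : Type*) [Group Δ] (N : Subgroup Δ) [hN : N.Normal] :
    Subgroup (Δ × Δ) where
  carrier := {p : Δ × Δ | ∃ δ n, n ∈ N ∧ p = (δ * n, δ)}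
  one_mem' := ⟨1, 1, N.one_mem, by simp; rfl⟩
  mul_mem' := by
    rintro _ _ ⟨δ, n, hn, rfl⟩ ⟨δ', n', hn', rfl⟩
    refine ⟨δ * δ', (δ'⁻¹ * n * δ') * n',
      N.mul_mem (by simpa using hN.conj_mem n hn δ'⁻¹) hn', ?_⟩
    have h1 : (δ * n) * (δ' * n') = (δ * δ') * ((δ'⁻¹ * n * δ') * n') := by group
    simp [Prod.ext_iff, h1]
  inv_mem' := by
    rintro _ ⟨δ, n, hn, rfl⟩
    refine ⟨δ⁻¹, δ * n⁻¹ * δ⁻¹, by simpa using hN.conj_mem n⁻¹ (N.inv_mem hn) δ, ?_⟩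
    have h1 : (δ * n)⁻¹ = δ⁻¹ * (δ * n⁻¹ * δ⁻¹) := by group
    simp [Prod.ext_iff, h1]

/-- If `Δ` is generated by a finite set `S` and `N` is the normal closure
of a finite set `F`, then `Δ ×_N Δ` is generated by `{(s,s) : s ∈ S} ∪ {(1,w) : w ∈ F}`. -/
theorem fiberProduct_finitely_generated {Δ : Type*} [Group Δ]
    (S F : Set Δ) (hSfin : S.Finite) (hFfin : F.Finite)
    (hSgen : Subgroup.closure S = ⊤) :
    Subgroup.closure ((fun s => (s, s)) '' S ∪ (fun w => ((1 : Δ), w)) '' F)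
      = fiberProduct Δ (Subgroup.normalClosure F) := by
  set K := Subgroup.closure ((fun s => (s, s)) '' S ∪ (fun w => ((1 : Δ), w)) '' F) with hK
  have diag : ∀ δ : Δ, (δ, δ) ∈ K := by
    intro δ
    have hδ : δ ∈ Subgroup.closure S := hSgen ▸ Subgroup.mem_top δ
    induction hδ using Subgroup.closure_induction with
    | mem x hx => exact Subgroup.subset_closure (Or.inl ⟨x, hx, rfl⟩)
    | one => exact K.one_mem
    | mul x y _ _ hx hy => simpa using K.mul_mem hx hy
    | inv x _ hx => simpa using K.inv_mem hx
  have hF1 : ∀ w ∈ F, ((w : Δ), (1 : Δ)) ∈ K := by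
    intro w hw
    have h1 : ((1 : Δ), w) ∈ K := Subgroup.subset_closure (Or.inr ⟨w, hw, rfl⟩)
    simpa using K.mul_mem (diag w) (K.inv_mem h1)
  have hN1 : ∀ n ∈ Subgroup.normalClosure F, ((n : Δ), (1 : Δ)) ∈ K := by
    intro n hn
    induction hn using Subgroup.closure_induction with
    | mem x hx =>
      obtain ⟨b, hb, hc⟩ := Group.mem_conjugatesOfSet_iff.mp hx
      obtain ⟨c, rfl⟩ := isConj_iff.mp hc
      have := K.mul_mem (K.mul_mem (diag c) (hF1 b hb)) (K.inv_mem (diag c))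
      simpa using this
    | one => exact K.one_mem
    | mul x y _ _ hx hy => simpa using K.mul_mem hx hy
    | inv x _ hx => simpa using K.inv_mem hx
  apply le_antisymm
  · rw [hK, Subgroup.closure_le]
    rintro _ (⟨s, hs, rfl⟩ | ⟨w, hw, rfl⟩)
    · exact ⟨s, 1, Subgroup.one_mem _, by simp⟩
    · exact ⟨w, w⁻¹, Subgroup.inv_mem _ (Subgroup.subset_normalClosure hw), by simp⟩
  · rintro p hp
    obtain ⟨δ, n, hn, rfl⟩ := hp
    have : ((δ, δ) : Δ × Δ) * (n, 1) = (δ * n, δ) := by simp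
    exact this ▸ K.mul_mem (diag δ) (hN1 n hn)
end

section
/- Let Λ be a group, L ≤ Λ a subgroup, and N ⊴ L a normal subgroup of L such that the triple (Λ, L, N) has the Cohen–Lyndon property. Then there is a surjective group homomorphism from ⟨⟨N⟩⟩/[⟨⟨N⟩⟩, Λ] onto N/[L, N]. -/
open Pointwise
open scoped commutatorElement

section
variable {Λ : Type*} [Group Λ] (L N : Subgroup Λ) [hn : (N.subgroupOf L).Normal]

abbrev CLQ := (N.subgroupOf L) ⧸ (⁅(⊤ : Subgroup L), N.subgroupOf L⁆.subgroupOf (N.subgroupOf L))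

def toCLQ (hNL : N ≤ L) (x : Λ) (hx : x ∈ N) : CLQ L N :=
  QuotientGroup.mk ⟨⟨x, hNL hx⟩, by simpa [Subgroup.mem_subgroupOf] using hx⟩

lemma toCLQ_congr (hNL : N ≤ L) {x y : Λ} (h : x = y) (hx : x ∈ N) :
    toCLQ L N hNL x hx = toCLQ L N hNL y (h ▸ hx) := by subst h; rfl

lemma toCLQ_mul (hNL : N ≤ L) (x y : Λ) (hx : x ∈ N) (hy : y ∈ N) :
    toCLQ L N hNL (x * y) (mul_mem hx hy) = toCLQ L N hNL x hx * toCLQ L N hNL y hy := rfl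

lemma CLQ_comm (a b : CLQ L N) : a * b = b * a := by
  induction a using QuotientGroup.induction_on with
  | H x =>
  induction b using QuotientGroup.induction_on with
  | H y =>
  rw [← QuotientGroup.mk_mul, ← QuotientGroup.mk_mul, QuotientGroup.eq]
  refine Subgroup.mem_subgroupOf.mpr ?_
  have h : (((x * y)⁻¹ * (y * x) : N.subgroupOf L) : L) = ⁅((y : L))⁻¹, ((x : L))⁻¹⁆ := by
    simp only [commutatorElement_def, Subgroup.coe_mul, Subgroup.coe_inv,
      InvMemClass.coe_inv, MulMemClass.coe_mul]
    group
  rw [h]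
  exact Subgroup.commutator_mem_commutator (Subgroup.mem_top _) (inv_mem x.2)

lemma conj_mem_of_mem_L (hNL : N ≤ L) {l x : Λ} (hl : l ∈ L) (hx : x ∈ N) :
    l * x * l⁻¹ ∈ N := by
  have := hn.conj_mem ⟨x, hNL hx⟩ (Subgroup.mem_subgroupOf.mpr hx) ⟨l, hl⟩
  simpa [Subgroup.mem_subgroupOf] using this

lemma toCLQ_conj (hNL : N ≤ L) {l x : Λ} (hl : l ∈ L) (hx : x ∈ N) :
    toCLQ L N hNL (l * x * l⁻¹) (conj_mem_of_mem_L L N hNL hl hx) = toCLQ L N hNL x hx := by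
  rw [toCLQ, toCLQ, QuotientGroup.eq]
  refine Subgroup.mem_subgroupOf.mpr ?_
  set c : N.subgroupOf L := ⟨⟨x, hNL hx⟩, Subgroup.mem_subgroupOf.mpr hx⟩ with hc
  set a : N.subgroupOf L := ⟨⟨l * x * l⁻¹, hNL (conj_mem_of_mem_L L N hNL hl hx)⟩,
      Subgroup.mem_subgroupOf.mpr (conj_mem_of_mem_L L N hNL hl hx)⟩ with ha
  have h : ((a⁻¹ * c : N.subgroupOf L) : L) = ⁅(⟨l, hl⟩ : L), ((c : L))⁻¹⁆ := by
    ext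
    simp only [ha, hc, commutatorElement_def, Subgroup.coe_mul, Subgroup.coe_inv,
      InvMemClass.coe_inv, MulMemClass.coe_mul]
    group
  rw [h]
  exact Subgroup.commutator_mem_commutator (Subgroup.mem_top _) (inv_mem c.2)


lemma memN_of_mem_conj (t : Λ) {y : Λ} (hy : y ∈ N.map (MulAut.conj t).toMonoidHom) :
    t⁻¹ * y * t ∈ N := by
  have := Subgroup.mem_map_equiv.mp hy
  simpa [MulAut.conj_symm_apply] using this

def pFactor (hNL : N ≤ L) (t : Λ) : (N.map (MulAut.conj t).toMonoidHom) →* CLQ L N :=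
  MonoidHom.mk' (fun y => toCLQ L N hNL (t⁻¹ * y.1 * t) (memN_of_mem_conj N t y.2))
    (by
      intro a b
      show toCLQ L N hNL (t⁻¹ * ((a * b : N.map (MulAut.conj t).toMonoidHom) : Λ) * t) _
          = toCLQ L N hNL (t⁻¹ * a.1 * t) _ * toCLQ L N hNL (t⁻¹ * b.1 * t) _
      rw [toCLQ_congr L N hNL
        (show t⁻¹ * ((a * b : N.map (MulAut.conj t).toMonoidHom) : Λ) * t
            = (t⁻¹ * a.1 * t) * (t⁻¹ * b.1 * t) by push_cast; group)]
      exact toCLQ_mul L N hNL _ _ (memN_of_mem_conj N t a.2) (memN_of_mem_conj N t b.2))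

lemma pFactor_apply (hNL : N ≤ L) (t : Λ) (y : N.map (MulAut.conj t).toMonoidHom) :
    pFactor L N hNL t y = toCLQ L N hNL (t⁻¹ * y.1 * t) (memN_of_mem_conj N t y.2) := rfl

end





/-- The triple `(Λ, L, N)` (with `N ⊴ L ≤ Λ`) has the Cohen–Lyndon property: there is a
set `T` of left coset representatives of `⟨⟨N⟩⟩L` in `Λ` such that `⟨⟨N⟩⟩` is the
internal free product of the conjugates `tNt⁻¹`, `t ∈ T`, i.e. the conjugates generate
`⟨⟨N⟩⟩` and the natural map from their abstract free product is injective. -/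
def CohenLyndon {Λ : Type*} [Group Λ] (L N : Subgroup Λ) : Prop :=
  ∃ T : Set Λ,
    (∀ g : Λ, ∃! t, t ∈ T ∧ t⁻¹ * g ∈ (Subgroup.normalClosure (N : Set Λ) ⊔ L)) ∧
    (⨆ t : T, N.map (MulAut.conj t.1).toMonoidHom) = Subgroup.normalClosure (N : Set Λ) ∧
    Function.Injective
      (Monoid.CoprodI.lift fun t : T => (N.map (MulAut.conj t.1).toMonoidHom).subtype)

set_option maxHeartbeats 1000000 in
/-- If `(Λ, L, N)` has the Cohen–Lyndon property, then there is a
surjective homomorphism `⟨⟨N⟩⟩/[⟨⟨N⟩⟩, Λ] ↠ N/[L, N]`. -/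
theorem cohen_lyndon_surjection {Λ : Type*} [Group Λ] (L N : Subgroup Λ)
    (hNL : N ≤ L) [hn : (N.subgroupOf L).Normal]
    (hCL : CohenLyndon L N) :
    ∃ φ : (Subgroup.normalClosure (N : Set Λ) ⧸
            (⁅Subgroup.normalClosure (N : Set Λ), (⊤ : Subgroup Λ)⁆.subgroupOf
              (Subgroup.normalClosure (N : Set Λ)))) →*
          ((N.subgroupOf L) ⧸
            (⁅(⊤ : Subgroup L), N.subgroupOf L⁆.subgroupOf (N.subgroupOf L))),
      Function.Surjective φ := by
  obtain ⟨T, hT, hsup, hinj⟩ := hCL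
  set K := Subgroup.normalClosure (N : Set Λ) with hK
  have hKn : K.Normal := Subgroup.normalClosure_normal
  set M : T → Subgroup Λ := fun t => N.map (MulAut.conj t.1).toMonoidHom with hM
  set f : Monoid.CoprodI (fun t : T => M t) →* Λ :=
    Monoid.CoprodI.lift (fun t : T => (M t).subtype) with hf
  have hf_of : ∀ (t : T) (y : M t), f (Monoid.CoprodI.of y) = y.1 := by
    intro t y
    simp [hf, Monoid.CoprodI.lift_of]
  have hMK : ∀ t : T, M t ≤ K := fun t => by
    rw [← hsup]; exact le_iSup (fun t : T => M t) t
  have hfK : ∀ x, f x ∈ K := by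
    intro x
    induction x using Monoid.CoprodI.induction_on with
    | one => rw [map_one]; exact one_mem K
    | of t y => rw [hf_of]; exact hMK t y.2
    | mul a b ha hb => rw [map_mul]; exact mul_mem ha hb
  set F : Monoid.CoprodI (fun t : T => M t) →* K := f.codRestrict K hfK with hF
  have hFval : ∀ x, (F x : Λ) = f x := fun x => rfl
  have hFinj : Function.Injective F := by
    intro a b h
    exact hinj (congrArg Subtype.val h)
  have hFsurj : Function.Surjective F := by
    intro x
    have hx : (x : Λ) ∈ ⨆ t : T, M t := by rw [hsup]; exact x.2
    have : ∃ w, f w = (x : Λ) := by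
      refine Subgroup.iSup_induction (C := fun g => ∃ w, f w = g) (fun t : T => M t) hx
        ?_ ⟨1, map_one f⟩ ?_
      · intro t y hy
        exact ⟨Monoid.CoprodI.of (⟨y, hy⟩ : M t), hf_of t _⟩
      · rintro a b ⟨wa, rfl⟩ ⟨wb, rfl⟩
        exact ⟨wa * wb, map_mul f wa wb⟩
    obtain ⟨w, hw⟩ := this
    exact ⟨w, Subtype.ext hw⟩
  set e : Monoid.CoprodI (fun t : T => M t) ≃* K :=
    MulEquiv.ofBijective F ⟨hFinj, hFsurj⟩ with he
  set p : ∀ t : T, M t →* CLQ L N := fun t => pFactor L N hNL t.1 with hp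
  set φ₁ : Monoid.CoprodI (fun t : T => M t) →* CLQ L N :=
    Monoid.CoprodI.lift p with hφ₁
  set ψ : K →* CLQ L N := φ₁.comp e.symm.toMonoidHom with hψ
  have hψF : ∀ z, ψ (F z) = φ₁ z := by
    intro z
    have h1 : e.symm (F z) = z := by
      apply e.injective
      rw [MulEquiv.apply_symm_apply]
      rfl
    simp [hψ, h1]
  -- Lemma C
  have hψconj : ∀ (t : T) (n : Λ) (hnN : n ∈ N) (hmem : t.1 * n * t.1⁻¹ ∈ K),
      ψ ⟨t.1 * n * t.1⁻¹, hmem⟩ = toCLQ L N hNL n hnN := by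
    intro t n hnN hmem
    have hy : t.1 * n * t.1⁻¹ ∈ M t := by
      refine Subgroup.mem_map_equiv.mpr ?_
      have : (MulAut.conj t.1).symm (t.1 * n * t.1⁻¹) = n := by
        rw [MulAut.conj_symm_apply]; group
      rw [this]; exact hnN
    have h1 : F (Monoid.CoprodI.of (⟨t.1 * n * t.1⁻¹, hy⟩ : M t)) = ⟨t.1 * n * t.1⁻¹, hmem⟩ :=
      Subtype.ext (hf_of t _)
    rw [← h1, hψF, Monoid.CoprodI.lift_of, hp, pFactor_apply,
      toCLQ_congr L N hNL (show t.1⁻¹ * (t.1 * n * t.1⁻¹) * t.1 = n by group)]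
  -- conjugation invariance
  have key : ∀ (b : Λ) (x : K), ψ ⟨b * x.1 * b⁻¹, hKn.conj_mem x.1 x.2 b⟩ = ψ x := by
    intro b x
    obtain ⟨w, rfl⟩ := hFsurj x
    set cb : K →* K := MonoidHom.mk' (fun z => ⟨b * z.1 * b⁻¹, hKn.conj_mem z.1 z.2 b⟩)
      (by intro u v; ext; push_cast; group) with hcb
    have hext : (ψ.comp cb).comp F = ψ.comp F := by
      apply Monoid.CoprodI.ext_hom
      intro t
      ext y
      show ψ (cb (F (Monoid.CoprodI.of y))) = ψ (F (Monoid.CoprodI.of y))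
      set n := t.1⁻¹ * y.1 * t.1 with hn'
      have hnN : n ∈ N := memN_of_mem_conj N t.1 y.2
      have hyval : (y : Λ) = t.1 * n * t.1⁻¹ := by rw [hn']; group
      obtain ⟨t', ⟨ht'T, ht'mem⟩, -⟩ := hT (b * t.1)
      have hmem2 : t'⁻¹ * (b * t.1) ∈ (K : Set Λ) * (L : Set Λ) := by
        rw [← Subgroup.normal_mul]; exact ht'mem
      obtain ⟨u, hu, l, hl, hul⟩ := hmem2
      have hmN : l * n * l⁻¹ ∈ N := conj_mem_of_mem_L L N hNL hl hnN
      have hw0 : t' * u * t'⁻¹ ∈ K := hKn.conj_mem u hu t'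
      have hmidM : t' * (l * n * l⁻¹) * t'⁻¹ ∈ M ⟨t', ht'T⟩ := by
        refine Subgroup.mem_map_equiv.mpr ?_
        have h3 : (MulAut.conj t').symm (t' * (l * n * l⁻¹) * t'⁻¹) = l * n * l⁻¹ := by
          rw [MulAut.conj_symm_apply]; group
        rw [h3]; exact hmN
      have hmidK : t' * (l * n * l⁻¹) * t'⁻¹ ∈ K := hMK ⟨t', ht'T⟩ hmidM
      have hul' : u * l = t'⁻¹ * (b * t.1) := hul
      have hb : b = t' * (u * l) * t.1⁻¹ := by
        rw [hul']; group
      have hdecomp : b * (y : Λ) * b⁻¹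
          = (t' * u * t'⁻¹) * (t' * (l * n * l⁻¹) * t'⁻¹) * (t' * u * t'⁻¹)⁻¹ := by
        rw [hyval, hb]; group
      have hst : cb (F (Monoid.CoprodI.of y)) =
          (⟨t' * u * t'⁻¹, hw0⟩ : K) * ⟨t' * (l * n * l⁻¹) * t'⁻¹, hmidK⟩ *
            (⟨t' * u * t'⁻¹, hw0⟩ : K)⁻¹ := by
        ext
        show b * (F (Monoid.CoprodI.of y) : Λ) * b⁻¹ = _
        rw [hFval, hf_of]
        push_cast
        rw [hdecomp]
      rw [hst, map_mul, map_mul, map_inv]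
      rw [hψconj ⟨t', ht'T⟩ (l * n * l⁻¹) hmN hmidK]
      rw [CLQ_comm L N (ψ ⟨t' * u * t'⁻¹, hw0⟩), mul_inv_cancel_right]
      rw [toCLQ_conj L N hNL hl hnN]
      rw [hψF, Monoid.CoprodI.lift_of, hp, pFactor_apply]
    have h := DFunLike.congr_fun hext w
    exact h
  -- the commutator is killed
  have hker : ∀ x : K, (x : Λ) ∈ ⁅K, (⊤ : Subgroup Λ)⁆ → ψ x = 1 := by
    have hle : ⁅K, (⊤ : Subgroup Λ)⁆ ≤ Subgroup.map K.subtype ψ.ker := by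
      rw [Subgroup.commutator_le]
      intro g hg h _
      have hconjK : h * g⁻¹ * h⁻¹ ∈ K := hKn.conj_mem g⁻¹ (inv_mem hg) h
      have hcomK : ⁅g, h⁆ ∈ K := by
        rw [commutatorElement_def, show g * h * g⁻¹ * h⁻¹ = g * (h * g⁻¹ * h⁻¹) by group]
        exact mul_mem hg hconjK
      refine ⟨⟨⁅g, h⁆, hcomK⟩, ?_, rfl⟩
      have hsplit : (⟨⁅g, h⁆, hcomK⟩ : K) = ⟨g, hg⟩ * ⟨h * g⁻¹ * h⁻¹, hconjK⟩ := by
        ext; push_cast; rw [commutatorElement_def]; group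
      simp only [SetLike.mem_coe, MonoidHom.mem_ker]
      rw [hsplit, map_mul]
      have h2 : ψ ⟨h * g⁻¹ * h⁻¹, hconjK⟩ = ψ ((⟨g, hg⟩ : K)⁻¹) := key h (⟨g, hg⟩ : K)⁻¹
      rw [h2, map_inv, mul_inv_cancel]
    intro x hx
    obtain ⟨y, hy, hyx⟩ := hle hx
    have hxy : y = x := Subtype.ext hyx
    rw [← hxy]
    exact hy
  refine ⟨QuotientGroup.lift (⁅K, (⊤ : Subgroup Λ)⁆.subgroupOf K) ψ
    (show _ ≤ ψ.ker from fun x hx => MonoidHom.mem_ker.mpr (hker x (Subgroup.mem_subgroupOf.mp hx))), ?_⟩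
  intro q
  induction q using QuotientGroup.induction_on with
  | H x =>
  have hxN : (x.1 : Λ) ∈ N := Subgroup.mem_subgroupOf.mp x.2
  obtain ⟨t₀, ⟨ht₀T, -⟩, -⟩ := hT 1
  have hmem : t₀ * (x.1 : Λ) * t₀⁻¹ ∈ K := hMK ⟨t₀, ht₀T⟩ (by
    refine Subgroup.mem_map_equiv.mpr ?_
    have h3 : (MulAut.conj t₀).symm (t₀ * (x.1 : Λ) * t₀⁻¹) = (x.1 : Λ) := by
      rw [MulAut.conj_symm_apply]; group
    rw [h3]; exact hxN)
  refine ⟨QuotientGroup.mk ⟨t₀ * (x.1 : Λ) * t₀⁻¹, hmem⟩, ?_⟩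
  rw [QuotientGroup.lift_mk]
  rw [hψconj ⟨t₀, ht₀T⟩ (x.1 : Λ) hxN hmem, toCLQ]
end
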